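/- Let X be a C-contracting quasi-geodesic in Y and let ΛX ⊆ ∂_hY be the set of accumulation points of X in ∂_hY. For every ξ ∈ ∂_hY \ [ΛX] there exists a subset π_X(ξ) ⊆ X of diameter at most 2C such that for every sequence y_n ∈ Y converging to ξ one has π_X(y_n) ⊆ π_X(ξ) for all sufficiently large n. -/

import Mathlib

open Metric Filter Topology Set MeasureTheory Pointwise

noncomputable section

namespace ConfDyn

/-- `γ` is (the image of) a geodesic segment from `x` to `y`. -/
def IsGeodesicIn (Y : Type*) [MetricSpace Y] (γ : Set Y) (x y : Y) : Prop :=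
  ∃ f : ℝ → Y, f 0 = x ∧ f (dist x y) = y ∧
    (∀ s ∈ Set.Icc (0 : ℝ) (dist x y), ∀ t ∈ Set.Icc (0 : ℝ) (dist x y),
      dist (f s) (f t) = |s - t|) ∧
    γ = f '' Set.Icc (0 : ℝ) (dist x y)

/-- `Y` is a geodesic metric space. -/
def GeodesicSpace (Y : Type*) [MetricSpace Y] : Prop :=
  ∀ x y : Y, ∃ γ : Set Y, IsGeodesicIn Y γ x y

/-- the shortest projection of the point `y` to the subset `X`. -/
def projSet {Y : Type*} [MetricSpace Y] (X : Set Y) (y : Y) : Set Y :=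
  {x ∈ X | dist y x = Metric.infDist y X}

/-- the shortest projection of the subset `A` to the subset `X`. -/
def projSetOf {Y : Type*} [MetricSpace Y] (X A : Set Y) : Set Y :=
  ⋃ a ∈ A, projSet X a

/-- `d_X(x,y)`, the diameter of `π_X(x) ∪ π_X(y)`. -/
def projDist {Y : Type*} [MetricSpace Y] (X : Set Y) (x y : Y) : ENNReal :=
  EMetric.diam (projSet X x ∪ projSet X y)

/-- `X` is a `C`-contracting subset: any geodesic segment at distance at least `C`
from `X` has shortest projection to `X` of diameter at most `C`. -/
def IsContractingSet {Y : Type*} [MetricSpace Y] (C : ℝ) (X : Set Y) : Prop :=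
  ∀ x y : Y, ∀ γ : Set Y, IsGeodesicIn Y γ x y →
    (∀ p ∈ γ, C ≤ Metric.infDist p X) →
    EMetric.diam (projSetOf X γ) ≤ ENNReal.ofReal C

/-- the Busemann function based at `o` associated to `y`, `b_y(x) = d(x,y) - d(o,y)`. -/
def busemannCM {Y : Type*} [MetricSpace Y] (o y : Y) : C(Y, ℝ) :=
  ⟨fun x => dist x y - dist o y,
    (continuous_id.dist continuous_const).sub continuous_const⟩

/-- the horofunction compactification of `Y`: the closure of `{b_y : y ∈ Y}` in
`C(Y,ℝ)` with the compact-open topology. -/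
def horoCpt (Y : Type*) [MetricSpace Y] (o : Y) : Set C(Y, ℝ) :=
  closure (Set.range (busemannCM o))

/-- `ξ` is a point of the horofunction boundary `∂_h Y`. -/
def IsHoroPoint {Y : Type*} [MetricSpace Y] (o : Y) (ξ : C(Y, ℝ)) : Prop :=
  ξ ∈ horoCpt Y o ∧ ∀ y : Y, ξ ≠ busemannCM o y

/-- a sequence of points of `Y` converges to `ξ` in the horofunction compactification. -/
def HoroConv {Y : Type*} [MetricSpace Y] (o : Y) (u : ℕ → Y) (ξ : C(Y, ℝ)) : Prop :=
  Filter.Tendsto (fun n => busemannCM o (u n)) atTop (nhds ξ)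

/-- two horofunctions have (K-)finite difference for some K. -/
def FinDiff {Y : Type*} [MetricSpace Y] (ξ η : C(Y, ℝ)) : Prop :=
  ∃ K : ℝ, ∀ z : Y, |ξ z - η z| ≤ K

/-- the locus of a subset of the horofunction boundary. -/
def locus {Y : Type*} [MetricSpace Y] (o : Y) (Λ : Set C(Y, ℝ)) : Set C(Y, ℝ) :=
  {η | IsHoroPoint o η ∧ ∃ ξ ∈ Λ, FinDiff ξ η}

/-- the finite-difference relation as a setoid on `C(Y,ℝ)`. -/
def finDiffSetoid (Y : Type*) [MetricSpace Y] : Setoid C(Y, ℝ) where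
  r := FinDiff
  iseqv := ⟨fun ξ => ⟨0, fun z => by simp⟩,
    fun h => h.imp (fun K hK z => by rw [abs_sub_comm]; exact hK z),
    fun h₁ h₂ => by
      obtain ⟨K₁, hK₁⟩ := h₁
      obtain ⟨K₂, hK₂⟩ := h₂
      exact ⟨K₁ + K₂, fun z => (abs_sub_le _ _ _).trans (add_le_add (hK₁ z) (hK₂ z))⟩⟩

/-- the limit set of a subset `X ⊆ Y` in the horofunction boundary. -/
def limitSetOf {Y : Type*} [MetricSpace Y] (o : Y) (X : Set Y) : Set C(Y, ℝ) :=
  {ξ | IsHoroPoint o ξ ∧ ∃ u : ℕ → Y, (∀ n, u n ∈ X) ∧ HoroConv o u ξ}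

/-- accumulation points of a sequence of points of `Y` in the horofunction boundary. -/
def accPoints {Y : Type*} [MetricSpace Y] (o : Y) (u : ℕ → Y) : Set C(Y, ℝ) :=
  {ξ | IsHoroPoint o ξ ∧ ∃ φ : ℕ → ℕ, StrictMono φ ∧ HoroConv o (u ∘ φ) ξ}

/-- `X` is a quasi-geodesic: the image of a quasi-isometric embedding of a real interval. -/
def IsQuasiGeodesicSet {Y : Type*} [MetricSpace Y] (X : Set Y) : Prop :=
  ∃ (c : ℝ) (I : Set ℝ) (φ : ℝ → Y), 1 ≤ c ∧ I.OrdConnected ∧ X = φ '' I ∧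
    ∀ s ∈ I, ∀ t ∈ I,
      (1 / c) * |s - t| - c ≤ dist (φ s) (φ t) ∧ dist (φ s) (φ t) ≤ c * |s - t| + c

section GroupAction

variable {Y : Type*} [MetricSpace Y] {G : Type*} [Group G] [MulAction G Y]

/-- `G` acts by isometries on `Y`. -/
def IsometricAction (G Y : Type*) [Group G] [MulAction G Y] [MetricSpace Y] : Prop :=
  ∀ g : G, Isometry (fun y : Y => g • y)

/-- the action of `G` on `Y` is (metrically) proper. -/
def ProperAction (G Y : Type*) [Group G] [MulAction G Y] [MetricSpace Y] : Prop :=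
  ∀ B : Set Y, Bornology.IsBounded B → Set.Finite {g : G | (g • B) ∩ B ≠ ∅}

/-- `G` is non-elementary: no finite-index subgroup is trivial or infinite cyclic. -/
def NonElementary (G : Type*) [Group G] : Prop :=
  ∀ H : Subgroup G, H.index ≠ 0 → ∀ g : G, H ≠ Subgroup.zpowers g

/-- the orbit of `o` under the cyclic group generated by `f`. -/
def cyclicOrbit (o : Y) (f : G) : Set Y :=
  {y : Y | ∃ n : ℤ, y = f ^ n • o}

/-- `f` is a contracting element with `C`-contracting orbit: it has infinite order,
`n ↦ fⁿ • o` is a quasi-isometric embedding of `ℤ`, and `⟨f⟩ • o` is `C`-contracting. -/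
def IsContractingElt (o : Y) (C : ℝ) (f : G) : Prop :=
  (∀ n : ℤ, n ≠ 0 → f ^ n ≠ 1) ∧
  (∃ c : ℝ, 1 ≤ c ∧ ∀ m n : ℤ,
      (1 / c) * |(m : ℝ) - (n : ℝ)| - c ≤ dist (f ^ m • o) (f ^ n • o) ∧
      dist (f ^ m • o) (f ^ n • o) ≤ c * |(m : ℝ) - (n : ℝ)| + c) ∧
  IsContractingSet C (cyclicOrbit o f)

/-- `f` is a contracting element. -/
def IsContractingEltAny (o : Y) (f : G) : Prop :=
  ∃ C : ℝ, 1 ≤ C ∧ IsContractingElt o C f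

/-- the elementary group `E(f)`: elements moving `⟨f⟩ • o` a finite Hausdorff distance. -/
def EGroup (o : Y) (f : G) : Set G :=
  {g : G | EMetric.hausdorffEdist (g • cyclicOrbit o f) (cyclicOrbit o f) ≠ ⊤}

/-- the axis `Ax(f) = E(f) • o`. -/
def axisOf (o : Y) (f : G) : Set Y :=
  (fun g : G => g • o) '' EGroup o f

/-- the family of all `G`-translated axes of `h` and `k`. -/
def axesPairFam (o : Y) (h k : G) : Set (Set Y) :=
  {S | ∃ g : G, S = g • axisOf o h ∨ S = g • axisOf o k}

/-- `h` and `k` are independent contracting elements: the family of their translated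
axes has bounded projection. -/
def IndepElts (o : Y) (h k : G) : Prop :=
  ∃ B : ℝ, 0 < B ∧ ∀ U ∈ axesPairFam o h k, ∀ V ∈ axesPairFam o h k,
    U ≠ V → EMetric.diam (projSetOf U V) ≤ ENNReal.ofReal B

/-- the family of all `G`-translated axes of the triple `f₁, f₂, f₃`. -/
def axesTripleFam (o : Y) (f₁ f₂ f₃ : G) : Set (Set Y) :=
  {S | ∃ g : G, S = g • axisOf o f₁ ∨ S = g • axisOf o f₂ ∨ S = g • axisOf o f₃}

/-- `F = {f₁,f₂,f₃}` is an admissible triple with constants `C`, `B₀`: three pairwise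
independent contracting elements whose translated axes are `C`-contracting with
`B₀`-bounded projection. -/
def IsAdmissibleTriple (o : Y) (C B₀ : ℝ) (f₁ f₂ f₃ : G) : Prop :=
  f₁ ≠ f₂ ∧ f₁ ≠ f₃ ∧ f₂ ≠ f₃ ∧
  IsContractingEltAny o f₁ ∧ IsContractingEltAny o f₂ ∧ IsContractingEltAny o f₃ ∧
  IndepElts o f₁ f₂ ∧ IndepElts o f₁ f₃ ∧ IndepElts o f₂ f₃ ∧
  (∀ S ∈ axesTripleFam o f₁ f₂ f₃, IsContractingSet C S) ∧
  (∀ U ∈ axesTripleFam o f₁ f₂ f₃, ∀ V ∈ axesTripleFam o f₁ f₂ f₃,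
    U ≠ V → EMetric.diam (projSetOf U V) ≤ ENNReal.ofReal B₀)

/-- the geodesic `γ` contains an `(r,f)`-barrier at `g • o`. -/
def HasBarrier (o : Y) (r : ℝ) (f g : G) (γ : Set Y) : Prop :=
  Metric.infDist (g • o) γ ≤ r ∧ Metric.infDist ((g * f) • o) γ ≤ r

/-- the partial cone `Ω_x^F(g • o, r)`. -/
def partialCone (o x : Y) (f₁ f₂ f₃ : G) (g : G) (r : ℝ) : Set Y :=
  {z | ∃ γ : Set Y, IsGeodesicIn Y γ x z ∧
      (HasBarrier o r f₁ g γ ∨ HasBarrier o r f₂ g γ ∨ HasBarrier o r f₃ g γ)}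

/-- the partial shadow `Π_x^F(g • o, r)`: accumulation points of the partial cone in
the horofunction boundary. -/
def partialShadow (o x : Y) (f₁ f₂ f₃ : G) (g : G) (r : ℝ) : Set C(Y, ℝ) :=
  {ξ | IsHoroPoint o ξ ∧ ∃ u : ℕ → Y, (∀ n, u n ∈ partialCone o x f₁ f₂ f₃ g r) ∧
      HoroConv o u ξ}

/-- `ξ` is an `(r,F)`-conical point. -/
def IsConicalPt (o : Y) (f₁ f₂ f₃ : G) (r : ℝ) (ξ : C(Y, ℝ)) : Prop :=
  ∃ g₀ : G, Set.Infinite {g : G | ξ ∈ partialShadow o (g₀ • o) f₁ f₂ f₃ g r}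

/-- the usual cone `Ω_x(y,r)`. -/
def usualCone (x y : Y) (r : ℝ) : Set Y :=
  {z | ∃ γ : Set Y, IsGeodesicIn Y γ x z ∧ ∃ p ∈ γ, dist p y ≤ r}

/-- the usual shadow `Π_x(y,r)`. -/
def usualShadow (o x y : Y) (r : ℝ) : Set C(Y, ℝ) :=
  {ξ | IsHoroPoint o ξ ∧ ∃ u : ℕ → Y, (∀ n, u n ∈ usualCone x y r) ∧ HoroConv o u ξ}

/-- the set `Λ_c(G)` of conical points of the action. -/
def conicalSet (G : Type*) {Y : Type*} [Group G] [MulAction G Y] [MetricSpace Y]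
    (o : Y) : Set C(Y, ℝ) :=
  {ξ | ∃ r : ℝ, 0 < r ∧ ∃ g₀ : G, ∃ u : ℕ → G,
      Filter.Tendsto (fun n => dist o (u n • o)) atTop atTop ∧
      ∀ n, ξ ∈ usualShadow o (g₀ • o) (u n • o) r}

/-- the attracting fixed-point set `[h⁺]`: the locus of the accumulation points of
`{hⁿ o : n > 0}` in the horofunction boundary. -/
def attrFix (o : Y) (h : G) : Set C(Y, ℝ) :=
  locus o (accPoints o (fun n : ℕ => h ^ (n + 1) • o))

/-- the repelling fixed-point set `[h⁻]`. -/
def repFix (o : Y) (h : G) : Set C(Y, ℝ) :=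
  locus o (accPoints o (fun n : ℕ => h ^ (-(n + 1) : ℤ) • o))

/-- the limit set `Λ G y` of the orbit `G • y` in the horofunction boundary. -/
def orbitLimitSet (G : Type*) {Y : Type*} [Group G] [MulAction G Y] [MetricSpace Y]
    (o y : Y) : Set C(Y, ℝ) :=
  {ξ | IsHoroPoint o ξ ∧ ∃ u : ℕ → G,
      Filter.Tendsto (fun n => busemannCM o (u n • y)) atTop (nhds ξ)}

/-- the action of an isometry `g` on horofunctions. -/
def horoAct [ContinuousConstSMul G Y] (o : Y) (g : G) (ξ : C(Y, ℝ)) : C(Y, ℝ) :=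
  ⟨fun y => ξ (g⁻¹ • y) - ξ (g⁻¹ • o),
    (ξ.continuous.comp (continuous_const_smul g⁻¹)).sub continuous_const⟩

/-- the number of orbit points of `Γ ⊆ G` in the closed ball of radius `R` around `o`. -/
def orbitCount (G : Type*) {Y : Type*} [Group G] [MulAction G Y] [MetricSpace Y]
    (o : Y) (Γ : Set G) (R : ℝ) : ℕ :=
  Nat.card {g : G // g ∈ Γ ∧ dist o (g • o) ≤ R}

/-- the critical exponent `ω_Γ` of a subset `Γ ⊆ G`. -/
def critExp (G : Type*) {Y : Type*} [Group G] [MulAction G Y] [MetricSpace Y]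
    (o : Y) (Γ : Set G) : ℝ :=
  Filter.limsup (fun R : ℝ => Real.log (orbitCount G o Γ R) / R) atTop

/-- an `ω`-dimensional `G`-equivariant conformal density on the horofunction boundary:
a family of finite measures supported on `∂_h Y`, normalized at `o`, `G`-equivariant,
with conformal derivative `dμ_x/dμ_y(ξ) = e^{-ω·B_ξ(x,y)}`. -/
def IsConformalDensity (G : Type*) {Y : Type*} [Group G] [MulAction G Y] [MetricSpace Y]
    [ContinuousConstSMul G Y] [MeasurableSpace C(Y, ℝ)]
    (o : Y) (ω : ℝ) (μ : Y → MeasureTheory.Measure C(Y, ℝ)) : Prop :=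
  (∀ x : Y, MeasureTheory.IsFiniteMeasure (μ x)) ∧
  (∀ x : Y, μ x {ξ : C(Y, ℝ) | ¬ IsHoroPoint o ξ} = 0) ∧
  μ o Set.univ = 1 ∧
  (∀ g : G, ∀ x : Y, MeasureTheory.Measure.map (horoAct o g) (μ x) = μ (g • x)) ∧
  (∀ x y : Y, μ x = (μ y).withDensity
      (fun ξ : C(Y, ℝ) => ENNReal.ofReal (Real.exp (-ω * (ξ x - ξ y)))))

end GroupAction

section Statement10Aux

variable {Y : Type*} [MetricSpace Y] [ProperSpace Y]

lemma busemannCM_apply (o y x : Y) : busemannCM o y x = dist x y - dist o y := rfl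

lemma busemannCM_lipschitz (o y : Y) : LipschitzWith 1 ⇑(busemannCM o y) := by
  apply LipschitzWith.of_dist_le_mul
  intro p q
  rw [NNReal.coe_one, one_mul, Real.dist_eq, busemannCM_apply, busemannCM_apply]
  have h : dist p y - dist o y - (dist q y - dist o y) = dist p y - dist q y := by ring
  rw [h]
  exact abs_dist_sub_le p q y

lemma projSet_nonempty {X : Set Y} (hXcl : IsClosed X) (hne : X.Nonempty) (y : Y) :
    (projSet X y).Nonempty := by
  obtain ⟨a, haX, hd⟩ := hXcl.exists_infDist_eq_dist hne y
  exact ⟨a, haX, hd.symm⟩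

lemma dist_le_of_diam_le {s : Set Y} {c : ℝ} (hc : 0 ≤ c)
    (h : EMetric.diam s ≤ ENNReal.ofReal c) {u v : Y} (hu : u ∈ s) (hv : v ∈ s) :
    dist u v ≤ c := by
  have h2 := le_trans (EMetric.edist_le_diam_of_mem hu hv) h
  rw [edist_dist] at h2
  exact (ENNReal.ofReal_le_ofReal_iff hc).mp h2

lemma mem_projSetOf {X A : Set Y} {y x : Y} (hy : y ∈ A) (hx : x ∈ projSet X y) :
    x ∈ projSetOf X A :=
  Set.mem_biUnion hy hx

lemma exists_point_on_geodesic (hY : GeodesicSpace Y) (x y : Y) {t : ℝ} (ht0 : 0 ≤ t)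
    (ht : t ≤ dist x y) : ∃ p : Y, dist x p = t ∧ dist p y = dist x y - t := by
  obtain ⟨γ, f, hf0, hfL, hiso, hγ⟩ := hY x y
  have h0mem : (0:ℝ) ∈ Set.Icc (0:ℝ) (dist x y) := ⟨le_refl _, dist_nonneg⟩
  have hLmem : dist x y ∈ Set.Icc (0:ℝ) (dist x y) := ⟨dist_nonneg, le_refl _⟩
  have htmem : t ∈ Set.Icc (0:ℝ) (dist x y) := ⟨ht0, ht⟩
  refine ⟨f t, ?_, ?_⟩
  · have h := hiso 0 h0mem t htmem
    rw [hf0] at h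
    rw [h, zero_sub, abs_neg, abs_of_nonneg ht0]
  · have h := hiso t htmem (dist x y) hLmem
    rw [hfL] at h
    rw [h, abs_of_nonpos (by linarith : t - dist x y ≤ 0), neg_sub]

/-- The fundamental dichotomy for a contracting set: either the projections of the two
endpoints of a geodesic are `C`-close, or the geodesic passes `2C`-close to the projection
of its starting point, giving the reverse triangle-type inequality. -/
lemma dichotomy (hY : GeodesicSpace Y) {C : ℝ} (hC : 1 ≤ C) {X : Set Y}
    (hXcl : IsClosed X) (hne : X.Nonempty) (hXcon : IsContractingSet C X)
    (z z' : Y) {a b : Y} (ha : a ∈ projSet X z) (hb : b ∈ projSet X z') :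
    dist a b ≤ C ∨ dist z a + dist a z' - 4 * C ≤ dist z z' := by
  have hC0 : (0:ℝ) ≤ C := le_trans zero_le_one hC
  obtain ⟨γ, f, hf0, hfL, hiso, hγ⟩ := hY z z'
  set L := dist z z' with hLdef
  have hL0 : (0:ℝ) ≤ L := dist_nonneg
  have h0mem : (0:ℝ) ∈ Set.Icc (0:ℝ) L := ⟨le_refl _, hL0⟩
  have hLmem : L ∈ Set.Icc (0:ℝ) L := ⟨hL0, le_refl _⟩
  by_cases hfar : ∀ t ∈ Set.Icc (0:ℝ) L, C ≤ infDist (f t) X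
  · left
    have hcon := hXcon z z' γ ⟨f, hf0, hfL, hiso, hγ⟩ (by
      intro p hp
      rw [hγ] at hp
      obtain ⟨t, htmem, rfl⟩ := hp
      exact hfar t htmem)
    have haγ : a ∈ projSetOf X γ := mem_projSetOf (by rw [hγ]; exact ⟨0, h0mem, hf0⟩) ha
    have hbγ : b ∈ projSetOf X γ := mem_projSetOf (by rw [hγ]; exact ⟨L, hLmem, hfL⟩) hb
    exact dist_le_of_diam_le hC0 hcon haγ hbγ
  · right
    push_neg at hfar
    obtain ⟨t₁, ht₁mem, ht₁⟩ := hfar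
    set A := {t : ℝ | t ∈ Set.Icc (0:ℝ) L ∧ infDist (f t) X ≤ C} with hA
    have hAne : A.Nonempty := ⟨t₁, ht₁mem, ht₁.le⟩
    have hAbdd : BddBelow A := ⟨0, fun t htA => htA.1.1⟩
    have hfcont : ContinuousOn f (Set.Icc (0:ℝ) L) := by
      apply LipschitzOnWith.continuousOn (K := 1)
      apply LipschitzOnWith.of_dist_le_mul
      intro s hs t htc
      rw [hiso s hs t htc, NNReal.coe_one, one_mul, Real.dist_eq]
    have hgcont : ContinuousOn (fun t => infDist (f t) X) (Set.Icc (0:ℝ) L) :=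
      (continuous_infDist_pt X).comp_continuousOn hfcont
    have hAclosed : IsClosed A := by
      have hAeq : A = Set.Icc (0:ℝ) L ∩ (fun t => infDist (f t) X) ⁻¹' Set.Iic C := by
        ext t
        simp only [hA, Set.mem_setOf_eq, Set.mem_inter_iff, Set.mem_preimage, Set.mem_Iic]
      rw [hAeq]
      exact hgcont.preimage_isClosed_of_isClosed isClosed_Icc isClosed_Iic
    set t₀ := sInf A with ht₀def
    have ht₀A : t₀ ∈ A := hAclosed.csInf_mem hAne hAbdd
    have ht₀mem : t₀ ∈ Set.Icc (0:ℝ) L := ht₀A.1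
    have ht₀L : t₀ ≤ L := ht₀mem.2
    have hlt : ∀ t, 0 ≤ t → t < t₀ → C < infDist (f t) X := by
      intro t ht0' htt
      by_contra hle
      push_neg at hle
      exact absurd (csInf_le hAbdd ⟨⟨ht0', le_trans htt.le ht₀L⟩, hle⟩) (not_le.mpr htt)
    rcases eq_or_lt_of_le ht₀mem.1 with h0 | h0
    · -- t₀ = 0 : the starting point is already C-close to X
      have hzC : dist z a ≤ C := by
        have hinf := ht₀A.2
        rw [← h0, hf0] at hinf
        rw [ha.2]
        exact hinf
      have tri : dist a z' ≤ dist a z + dist z z' := dist_triangle _ _ _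
      have hcc : dist a z = dist z a := dist_comm _ _
      linarith
    · -- 0 < t₀ : entry-point argument
      set p := f t₀ with hpdef
      have hd_zp : dist z p = t₀ := by
        have h := hiso 0 h0mem t₀ ht₀mem
        rw [hf0] at h
        rw [hpdef, h, zero_sub, abs_neg, abs_of_nonneg ht₀mem.1]
      have hd_pz' : dist p z' = L - t₀ := by
        have h := hiso t₀ ht₀mem L hLmem
        rw [hfL] at h
        rw [hpdef, h, abs_of_nonpos (by linarith : t₀ - L ≤ 0), neg_sub]
      have hsub : IsGeodesicIn Y (f '' Set.Icc (0:ℝ) t₀) z p := by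
        refine ⟨f, hf0, ?_, ?_, ?_⟩
        · rw [hd_zp]
        · intro s hs t htc
          rw [hd_zp] at hs htc
          exact hiso s ⟨hs.1, hs.2.trans ht₀L⟩ t ⟨htc.1, htc.2.trans ht₀L⟩
        · rw [hd_zp]
      have hfar' : ∀ q ∈ f '' Set.Icc (0:ℝ) t₀, C ≤ infDist q X := by
        rintro q ⟨t, htmem, rfl⟩
        rcases lt_or_eq_of_le htmem.2 with hlt' | heq
        · exact (hlt t htmem.1 hlt').le
        · rw [heq]
          have hcl : t₀ ∈ closure (Set.Ico (0:ℝ) t₀) := by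
            rw [closure_Ico (ne_of_lt h0)]
            exact ⟨ht₀mem.1, le_refl _⟩
          haveI hnb : (nhdsWithin t₀ (Set.Ico (0:ℝ) t₀)).NeBot :=
            mem_closure_iff_nhdsWithin_neBot.mp hcl
          have hcw : Filter.Tendsto (fun s => infDist (f s) X)
              (nhdsWithin t₀ (Set.Ico (0:ℝ) t₀)) (nhds (infDist (f t₀) X)) :=
            (hgcont t₀ ht₀mem).mono (fun s hsmem => ⟨hsmem.1, hsmem.2.le.trans ht₀L⟩)
          exact ge_of_tendsto hcw
            (eventually_nhdsWithin_of_forall (fun s hsmem => (hlt s hsmem.1 hsmem.2).le))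
      have hcon := hXcon z p _ hsub hfar'
      obtain ⟨r, hr⟩ := projSet_nonempty hXcl hne p
      have har : dist a r ≤ C := dist_le_of_diam_le hC0 hcon
        (mem_projSetOf ⟨0, ⟨le_refl _, ht₀mem.1⟩, hf0⟩ ha)
        (mem_projSetOf ⟨t₀, ⟨ht₀mem.1, le_refl _⟩, hpdef.symm⟩ hr)
      have hpr : dist p r ≤ C := by rw [hr.2]; exact ht₀A.2
      have h1 : dist z a ≤ dist z p + dist p a := dist_triangle _ _ _
      have h1' : dist p a ≤ dist p r + dist r a := dist_triangle _ _ _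
      have h2 : dist a z' ≤ dist a p + dist p z' := dist_triangle _ _ _
      have h2' : dist a p ≤ dist a r + dist r p := dist_triangle _ _ _
      have hc1 : dist r a = dist a r := dist_comm _ _
      have hc2 : dist r p = dist p r := dist_comm _ _
      linarith

lemma horoConv_uniformOn {o : Y} {u : ℕ → Y} {η : C(Y, ℝ)}
    (h : Filter.Tendsto (fun k => busemannCM o (u k)) atTop (nhds η))
    (s : Set Y) (hs : IsCompact s) :
    TendstoUniformlyOn (fun k x => busemannCM o (u k) x) (⇑η) atTop s :=
  (ContinuousMap.tendsto_iff_forall_isCompact_tendstoUniformlyOn.mp h) s hs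

lemma horoConv_eval {o : Y} {u : ℕ → Y} {η : C(Y, ℝ)}
    (h : Filter.Tendsto (fun k => busemannCM o (u k)) atTop (nhds η)) (w : Y) :
    Filter.Tendsto (fun k => busemannCM o (u k) w) atTop (nhds (η w)) :=
  ((continuous_eval_const w).tendsto η).comp h

lemma busemann_tendsto {o : Y} {v : ℕ → Y} {y : Y} (hv : Filter.Tendsto v atTop (nhds y)) :
    Filter.Tendsto (fun k => busemannCM o (v k)) atTop (nhds (busemannCM o y)) := by
  rw [ContinuousMap.tendsto_iff_forall_isCompact_tendstoUniformlyOn]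
  intro K hK
  rw [Metric.tendstoUniformlyOn_iff]
  intro ε hε
  have hv' : ∀ᶠ k in atTop, dist (v k) y < ε / 2 :=
    (Metric.tendsto_nhds.mp hv) (ε / 2) (by linarith)
  filter_upwards [hv'] with k hk x hx
  have h1 : |dist x y - dist x (v k)| ≤ dist y (v k) := by
    rw [dist_comm x y, dist_comm x (v k)]
    exact abs_dist_sub_le _ _ _
  have h2 : |dist o (v k) - dist o y| ≤ dist (v k) y := by
    rw [dist_comm o (v k), dist_comm o y]
    exact abs_dist_sub_le _ _ _
  rw [Real.dist_eq, busemannCM_apply, busemannCM_apply]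
  have he : dist x y - dist o y - (dist x (v k) - dist o (v k)) =
      (dist x y - dist x (v k)) + (dist o (v k) - dist o y) := by ring
  rw [he]
  have h3 := (abs_add_le _ _).trans (add_le_add h1 h2)
  have h4 : dist y (v k) = dist (v k) y := dist_comm _ _
  linarith

lemma dist_tendsto_atTop {o : Y} {ξ : C(Y, ℝ)} (hξ : IsHoroPoint o ξ) {z : ℕ → Y}
    (hz : HoroConv o z ξ) : Filter.Tendsto (fun n => dist o (z n)) atTop atTop := by
  rw [Filter.tendsto_atTop]
  intro T
  by_contra hev
  have hfreq : ∃ᶠ n in atTop, dist o (z n) < T := by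
    rw [Filter.not_eventually] at hev
    exact hev.mono (fun n hn => not_le.mp hn)
  obtain ⟨φ, hφ, hmem⟩ := Filter.extraction_of_frequently_atTop hfreq
  have hball : ∀ k, z (φ k) ∈ Metric.closedBall o |T| := fun k =>
    Metric.mem_closedBall.mpr (by rw [dist_comm]; exact (hmem k).le.trans (le_abs_self T))
  obtain ⟨ylim, _, ψ, hψ, hconv⟩ := (isCompact_closedBall o |T|).tendsto_subseq hball
  have h1 : Filter.Tendsto (fun k => busemannCM o (z (φ (ψ k)))) atTop
      (nhds (busemannCM o ylim)) := busemann_tendsto hconv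
  have h2 : Filter.Tendsto (fun k => busemannCM o (z (φ (ψ k)))) atTop (nhds ξ) :=
    hz.comp ((hφ.comp hψ).tendsto_atTop)
  exact hξ.2 ylim (tendsto_nhds_unique h2 h1)

lemma exists_horoconv_subseq (o : Y) (v : ℕ → Y) :
    ∃ (φ : ℕ → ℕ) (η : C(Y, ℝ)), StrictMono φ ∧
      Filter.Tendsto (fun k => busemannCM o (v (φ k))) atTop (nhds η) := by
  set S : Set C(Y, ℝ) := {f | LipschitzWith 1 ⇑f ∧ f o = 0} with hS
  have hmem : ∀ y : Y, busemannCM o y ∈ S := by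
    intro y
    refine ⟨busemannCM_lipschitz o y, ?_⟩
    rw [busemannCM_apply]
    ring
  have hcomp : IsCompact S := by
    apply ArzelaAscoli.isCompact_of_equicontinuous
    · have himg : ContinuousMap.toFun '' S = {g : Y → ℝ | LipschitzWith 1 g ∧ g o = 0} := by
        ext g
        constructor
        · rintro ⟨f, hf, rfl⟩
          exact hf
        · rintro ⟨h1, h2⟩
          exact ⟨⟨g, h1.continuous⟩, ⟨h1, h2⟩, rfl⟩
      rw [himg]
      have hcl : IsClosed {g : Y → ℝ | LipschitzWith 1 g ∧ g o = 0} := by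
        have heq : {g : Y → ℝ | LipschitzWith 1 g ∧ g o = 0} =
            (⋂ (p : Y) (q : Y), {g : Y → ℝ | dist (g p) (g q) ≤ dist p q}) ∩
              {g : Y → ℝ | g o = 0} := by
          ext g
          simp only [Set.mem_inter_iff, Set.mem_iInter, Set.mem_setOf_eq]
          constructor
          · rintro ⟨h1, h2⟩
            refine ⟨fun p q => ?_, h2⟩
            have := h1.dist_le_mul p q
            rwa [NNReal.coe_one, one_mul] at this
          · rintro ⟨h1, h2⟩
            refine ⟨LipschitzWith.of_dist_le_mul (fun p q => ?_), h2⟩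
            rw [NNReal.coe_one, one_mul]
            exact h1 p q
        rw [heq]
        apply IsClosed.inter
        · exact isClosed_iInter fun p => isClosed_iInter fun q =>
            isClosed_le ((continuous_apply p).dist (continuous_apply q)) continuous_const
        · exact isClosed_eq (continuous_apply o) continuous_const
      have hsub : {g : Y → ℝ | LipschitzWith 1 g ∧ g o = 0} ⊆
          Set.univ.pi (fun y => Metric.closedBall (0:ℝ) (dist o y)) := by
        intro g hg
        rw [Set.mem_univ_pi]
        intro y
        rw [Metric.mem_closedBall]
        have h1 := hg.1.dist_le_mul y o
        rw [NNReal.coe_one, one_mul] at h1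
        calc dist (g y) 0 = dist (g y) (g o) := by rw [hg.2]
        _ ≤ dist y o := h1
        _ = dist o y := dist_comm _ _
      exact IsCompact.of_isClosed_subset
        (isCompact_univ_pi (fun y => isCompact_closedBall _ _)) hcl hsub
    · apply Metric.equicontinuous_of_continuity_modulus (fun r => r) Filter.tendsto_id
      rintro x y ⟨f, hf⟩
      have := hf.1.dist_le_mul x y
      rwa [NNReal.coe_one, one_mul] at this
  obtain ⟨η, -, φ, hφ, hconv⟩ :=
    hcomp.isSeqCompact (x := fun k => busemannCM o (v k)) (fun k => hmem (v k))
  exact ⟨φ, η, hφ, hconv⟩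

lemma isHoroPoint_of_escape (hY : GeodesicSpace Y) {o : Y} {u : ℕ → Y} {η : C(Y, ℝ)}
    (hd : Filter.Tendsto (fun k => dist o (u k)) atTop atTop)
    (hconv : Filter.Tendsto (fun k => busemannCM o (u k)) atTop (nhds η)) :
    IsHoroPoint o η := by
  constructor
  · exact mem_closure_of_tendsto hconv
      (Filter.Eventually.of_forall fun k => Set.mem_range_self _)
  · intro y hy
    set T : ℝ := dist o y + 2 with hT
    have hT0 : 0 ≤ T := by
      have := dist_nonneg (x := o) (y := y)
      linarith
    have huc := horoConv_uniformOn hconv (Metric.closedBall o T) (isCompact_closedBall o T)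
    rw [Metric.tendstoUniformlyOn_iff] at huc
    have h1 := huc 1 one_pos
    have h2 := hd.eventually_ge_atTop T
    obtain ⟨k, hk1, hk2⟩ := (h1.and h2).exists
    obtain ⟨g, hg1, hg2⟩ := exists_point_on_geodesic hY o (u k) hT0 hk2
    have hgball : g ∈ Metric.closedBall o T := by
      rw [Metric.mem_closedBall, dist_comm]
      exact hg1.le
    have hbg : busemannCM o (u k) g = -T := by
      rw [busemannCM_apply, hg2]
      ring
    have hclose := hk1 g hgball
    rw [hbg, Real.dist_eq] at hclose
    have habs := abs_lt.mp hclose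
    have hηg : η g = dist g y - dist o y := by rw [hy]; rfl
    have hge : -dist o y ≤ η g := by
      rw [hηg]
      have := dist_nonneg (x := g) (y := y)
      linarith
    linarith [habs.2, hge]

lemma projections_bounded (hY : GeodesicSpace Y) {C : ℝ} (hC : 1 ≤ C) {X : Set Y}
    (hXcl : IsClosed X) (hne : X.Nonempty) (hXcon : IsContractingSet C X)
    {o : Y} {ξ : C(Y, ℝ)} (hξ : IsHoroPoint o ξ) (hξn : ξ ∉ locus o (limitSetOf o X))
    {z : ℕ → Y} (hz : HoroConv o z ξ) :
    ∃ R : ℝ, ∀ n, ∀ a ∈ projSet X (z n), dist o a ≤ R := by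
  by_contra hcontra
  push_neg at hcontra
  set M : ℕ → ℝ := fun k => (Finset.range (k + 1)).sup' Finset.nonempty_range_add_one
      (fun n => dist o (z n) + infDist (z n) X) with hM
  have hM0 : ∀ k, 0 ≤ M k := by
    intro k
    rw [hM]
    exact le_trans (add_nonneg dist_nonneg infDist_nonneg)
      (Finset.le_sup' (fun m => dist o (z m) + infDist (z m) X)
        (Finset.self_mem_range_succ k))
  have hsel : ∀ k : ℕ, ∃ n a, a ∈ projSet X (z n) ∧ (k : ℝ) + M k < dist o a := by
    intro k
    obtain ⟨n, a, haproj, hlt⟩ := hcontra ((k : ℝ) + M k)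
    exact ⟨n, a, haproj, hlt⟩
  choose n xx hproj hbig using hsel
  have hxX : ∀ k, xx k ∈ X := fun k => (hproj k).1
  have hdk : ∀ k : ℕ, (k : ℝ) < dist o (xx k) := fun k =>
    lt_of_le_of_lt (le_add_of_nonneg_right (hM0 k)) (hbig k)
  have hnk : ∀ k, k < n k := by
    intro k
    by_contra hle
    push_neg at hle
    have h1 : dist o (xx k) ≤ dist o (z (n k)) + infDist (z (n k)) X := by
      have hpd := (hproj k).2
      calc dist o (xx k) ≤ dist o (z (n k)) + dist (z (n k)) (xx k) := dist_triangle _ _ _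
      _ = dist o (z (n k)) + infDist (z (n k)) X := by rw [hpd]
    have h2 : dist o (z (n k)) + infDist (z (n k)) X ≤ M k := by
      rw [hM]
      exact Finset.le_sup' (fun m => dist o (z m) + infDist (z m) X)
        (Finset.mem_range_succ_iff.mpr hle)
    have h3 := hbig k
    have hk0 : (0:ℝ) ≤ (k:ℝ) := Nat.cast_nonneg k
    linarith
  obtain ⟨φ, η, hφ, hη⟩ := exists_horoconv_subseq o xx
  set u : ℕ → Y := fun k => xx (φ k) with hu
  have hud : ∀ k : ℕ, (k : ℝ) < dist o (u k) := fun k =>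
    lt_of_le_of_lt (Nat.cast_le.mpr hφ.le_apply) (hdk (φ k))
  have hu_esc : Filter.Tendsto (fun k => dist o (u k)) atTop atTop :=
    tendsto_atTop_mono (fun k => (hud k).le) tendsto_natCast_atTop_atTop
  have hν : Filter.Tendsto (fun k => n (φ k)) atTop atTop :=
    tendsto_atTop_mono (fun k => le_of_lt (lt_of_le_of_lt hφ.le_apply (hnk (φ k)))) tendsto_id
  have hzν : Filter.Tendsto (fun k => busemannCM o (z (n (φ k)))) atTop (nhds ξ) := hz.comp hν
  have hηpt : IsHoroPoint o η := isHoroPoint_of_escape hY hu_esc hη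
  have hηlim : η ∈ limitSetOf o X := ⟨hηpt, u, fun k => hxX (φ k), hη⟩
  obtain ⟨xo, hxo⟩ := projSet_nonempty hXcl hne o
  have hfd : FinDiff η ξ := by
    refine ⟨4 * C, fun w => ?_⟩
    obtain ⟨xw, hxw⟩ := projSet_nonempty hXcl hne w
    have hstuff : Filter.Tendsto
        (fun k => busemannCM o (u k) w - busemannCM o (z (n (φ k))) w) atTop
        (nhds (η w - ξ w)) := (horoConv_eval hη w).sub (horoConv_eval hzν w)
    have hev : ∀ᶠ k in atTop,
        |busemannCM o (u k) w - busemannCM o (z (n (φ k))) w| ≤ 4 * C := by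
      filter_upwards [hu_esc.eventually_gt_atTop (dist o xo + C),
        hu_esc.eventually_gt_atTop (dist o xw + C)] with k h1 h2
      have hproj' : u k ∈ projSet X (z (n (φ k))) := hproj (φ k)
      have key1 : dist (z (n (φ k))) (u k) + dist (u k) o - 4 * C ≤ dist (z (n (φ k))) o := by
        rcases dichotomy hY hC hXcl hne hXcon (z (n (φ k))) o hproj' hxo with hcase | hcase
        · exfalso
          have t1 : dist o (u k) ≤ dist o xo + dist xo (u k) := dist_triangle _ _ _
          have t2 : dist xo (u k) = dist (u k) xo := dist_comm _ _
          linarith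
        · exact hcase
      have key2 : dist (z (n (φ k))) (u k) + dist (u k) w - 4 * C ≤ dist (z (n (φ k))) w := by
        rcases dichotomy hY hC hXcl hne hXcon (z (n (φ k))) w hproj' hxw with hcase | hcase
        · exfalso
          have t1 : dist o (u k) ≤ dist o xw + dist xw (u k) := dist_triangle _ _ _
          have t2 : dist xw (u k) = dist (u k) xw := dist_comm _ _
          linarith
        · exact hcase
      rw [busemannCM_apply, busemannCM_apply, abs_le]
      have t1 : dist w (z (n (φ k))) ≤ dist w (u k) + dist (u k) (z (n (φ k))) :=
        dist_triangle _ _ _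
      have t2 : dist o (z (n (φ k))) ≤ dist o (u k) + dist (u k) (z (n (φ k))) :=
        dist_triangle _ _ _
      have c1 : dist (z (n (φ k))) o = dist o (z (n (φ k))) := dist_comm _ _
      have c2 : dist (u k) o = dist o (u k) := dist_comm _ _
      have c3 : dist (u k) (z (n (φ k))) = dist (z (n (φ k))) (u k) := dist_comm _ _
      have c4 : dist (u k) w = dist w (u k) := dist_comm _ _
      have c5 : dist (z (n (φ k))) w = dist w (z (n (φ k))) := dist_comm _ _
      constructor
      · linarith
      · linarith
    exact le_of_tendsto hstuff.abs hev
  exact hξn ⟨hξ, η, hηlim, hfd⟩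

lemma eventual_proj_close (hY : GeodesicSpace Y) {C : ℝ} (hC : 1 ≤ C) {X : Set Y}
    (hXcl : IsClosed X) (hne : X.Nonempty) (hXcon : IsContractingSet C X)
    {o : Y} {ξ : C(Y, ℝ)} (hξ : IsHoroPoint o ξ) (hξn : ξ ∉ locus o (limitSetOf o X))
    {z : ℕ → Y} (hz : HoroConv o z ξ) :
    ∃ N, ∀ m, N ≤ m → ∀ n, N ≤ n → ∀ a ∈ projSet X (z m), ∀ b ∈ projSet X (z n),
      dist a b ≤ C := by
  have hC0 : (0:ℝ) ≤ C := le_trans zero_le_one hC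
  obtain ⟨R, hR⟩ := projections_bounded hY hC hXcl hne hXcon hξ hξn hz
  have hR0 : 0 ≤ R := by
    obtain ⟨a, ha⟩ := projSet_nonempty hXcl hne (z 0)
    exact le_trans dist_nonneg (hR 0 a ha)
  set T : ℝ := 2 * R + 4 * C with hTdef
  have hT0 : 0 ≤ T := by rw [hTdef]; linarith
  have huc := horoConv_uniformOn hz (Metric.closedBall o T) (isCompact_closedBall o T)
  rw [Metric.tendstoUniformlyOn_iff] at huc
  obtain ⟨N₁, hN₁⟩ := Filter.eventually_atTop.mp (huc 1 one_pos)
  obtain ⟨N₂, hN₂⟩ := Filter.eventually_atTop.mp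
    ((dist_tendsto_atTop hξ hz).eventually_ge_atTop T)
  refine ⟨max N₁ N₂, ?_⟩
  intro m hm n hn a ha b hb
  by_contra hab
  push_neg at hab
  have hd : dist (z m) a + dist a (z n) - 4 * C ≤ dist (z m) (z n) := by
    rcases dichotomy hY hC hXcl hne hXcon (z m) (z n) ha hb with h | h
    · exact absurd h (not_le.mpr hab)
    · exact h
  have hTm : T ≤ dist o (z m) := hN₂ m (le_trans (le_max_right _ _) hm)
  obtain ⟨g, hg1, hg2⟩ := exists_point_on_geodesic hY o (z m) hT0 hTm
  have hgball : g ∈ Metric.closedBall o T := by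
    rw [Metric.mem_closedBall, dist_comm]
    exact hg1.le
  have e1 : busemannCM o (z m) g = -T := by
    rw [busemannCM_apply, hg2]
    ring
  have e2 : (0:ℝ) ≤ busemannCM o (z n) g := by
    rw [busemannCM_apply]
    have t1 : dist (z m) (z n) ≤ dist (z m) g + dist g (z n) := dist_triangle _ _ _
    have hRa : dist o a ≤ R := hR m a ha
    have u1 : dist o (z m) ≤ dist o a + dist a (z m) := dist_triangle _ _ _
    have u2 : dist o (z n) ≤ dist o a + dist a (z n) := dist_triangle _ _ _
    have c1 : dist a (z m) = dist (z m) a := dist_comm _ _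
    have c2 : dist (z m) g = dist g (z m) := dist_comm _ _
    linarith [hg2]
  have q1 := hN₁ m (le_trans (le_max_left _ _) hm) g hgball
  have q2 := hN₁ n (le_trans (le_max_left _ _) hn) g hgball
  rw [e1, Real.dist_eq] at q1
  rw [Real.dist_eq] at q2
  have a1 := abs_lt.mp q1
  have a2 := abs_lt.mp q2
  have hT4 : (4:ℝ) ≤ T := by rw [hTdef]; linarith
  linarith [a1.2, a2.1, e2]

lemma horoConv_interleave {o : Y} {ξ : C(Y, ℝ)} {y y' : ℕ → Y}
    (hy : HoroConv o y ξ) (hy' : HoroConv o y' ξ) :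
    HoroConv o (fun n => if n % 2 = 0 then y (n / 2) else y' (n / 2)) ξ := by
  rw [HoroConv, Filter.tendsto_def]
  intro s hs
  obtain ⟨N₁, hN₁⟩ := Filter.mem_atTop_sets.mp (Filter.tendsto_def.mp hy s hs)
  obtain ⟨N₂, hN₂⟩ := Filter.mem_atTop_sets.mp (Filter.tendsto_def.mp hy' s hs)
  apply Filter.mem_atTop_sets.mpr
  refine ⟨2 * (N₁ + N₂), fun n hn => ?_⟩
  simp only [Set.mem_preimage]
  by_cases hpar : n % 2 = 0
  · rw [if_pos hpar]
    exact hN₁ (n / 2) (by omega)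
  · rw [if_neg hpar]
    exact hN₂ (n / 2) (by omega)

end Statement10Aux

/-- boundary projection to a `C`-contracting quasi-geodesic: for every
`ξ ∈ ∂_h Y` outside the locus of `Λ X` there is a subset `P ⊆ X` of diameter at most
`2C` containing the projections of every sequence converging to `ξ`, eventually. -/
theorem statement10 {Y : Type*} [MetricSpace Y] [ProperSpace Y]
    (hY : GeodesicSpace Y) (o : Y) (C : ℝ) (hC : 1 ≤ C)
    (X : Set Y) (hXcl : IsClosed X) (hXq : IsQuasiGeodesicSet X)
    (hXcon : IsContractingSet C X)
    (ξ : C(Y, ℝ)) (hξ : IsHoroPoint o ξ) (hξn : ξ ∉ locus o (limitSetOf o X)) :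
    ∃ P : Set Y, P ⊆ X ∧ EMetric.diam P ≤ ENNReal.ofReal (2 * C) ∧
      ∀ y : ℕ → Y, HoroConv o y ξ → ∀ᶠ n in atTop, projSet X (y n) ⊆ P := by
  rcases X.eq_empty_or_nonempty with hXe | hne
  · refine ⟨∅, Set.empty_subset _, ?_, ?_⟩
    · rw [EMetric.diam, EMetric.diam_empty]
      exact zero_le
    · intro y hy
      apply Filter.Eventually.of_forall
      intro k x hx
      rw [hXe] at hx
      exact hx.1
  by_cases hseq : ∃ y : ℕ → Y, HoroConv o y ξ
  · obtain ⟨y₀, hy₀⟩ := hseq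
    refine ⟨{x ∈ X | ∀ᶠ k in atTop, ∀ w ∈ projSet X (y₀ k), dist x w ≤ C},
      fun x hx => hx.1, ?_, ?_⟩
    · apply EMetric.diam_le
      intro p hp q hq
      rw [edist_dist]
      apply ENNReal.ofReal_le_ofReal
      obtain ⟨k, hk1, hk2⟩ := (hp.2.and hq.2).exists
      obtain ⟨w, hw⟩ := projSet_nonempty hXcl hne (y₀ k)
      have d1 := hk1 w hw
      have d2 := hk2 w hw
      have tri := dist_triangle p w q
      have hcc : dist w q = dist q w := dist_comm _ _
      linarith
    · intro y hy
      have hzconv : HoroConv o (fun k => if k % 2 = 0 then y₀ (k / 2) else y (k / 2)) ξ :=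
        horoConv_interleave hy₀ hy
      obtain ⟨N, hN⟩ := eventual_proj_close hY hC hXcl hne hXcon hξ hξn hzconv
      rw [Filter.eventually_atTop]
      refine ⟨N, fun k hk x hx => ?_⟩
      have hxz : x ∈ projSet X
          ((fun i => if i % 2 = 0 then y₀ (i / 2) else y (i / 2)) (2 * k + 1)) := by
        have hval : (fun i => if i % 2 = 0 then y₀ (i / 2) else y (i / 2)) (2 * k + 1)
            = y k := by
          show (if (2 * k + 1) % 2 = 0 then y₀ ((2 * k + 1) / 2) else y ((2 * k + 1) / 2))
            = y k
          rw [if_neg (by omega : ¬(2 * k + 1) % 2 = 0)]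
          congr 1
          omega
        rw [hval]
        exact hx
      refine ⟨hx.1, ?_⟩
      rw [Filter.eventually_atTop]
      refine ⟨N, fun j hj w hw => ?_⟩
      have hwz : w ∈ projSet X
          ((fun i => if i % 2 = 0 then y₀ (i / 2) else y (i / 2)) (2 * j)) := by
        have hval : (fun i => if i % 2 = 0 then y₀ (i / 2) else y (i / 2)) (2 * j)
            = y₀ j := by
          show (if (2 * j) % 2 = 0 then y₀ ((2 * j) / 2) else y ((2 * j) / 2)) = y₀ j
          rw [if_pos (by omega : (2 * j) % 2 = 0)]
          congr 1
          omega
        rw [hval]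
        exact hw
      exact hN (2 * k + 1) (by omega) (2 * j) (by omega) x hxz w hwz
  · obtain ⟨x₀, hx₀⟩ := hne
    refine ⟨{x₀}, Set.singleton_subset_iff.mpr hx₀, ?_, ?_⟩
    · rw [EMetric.diam, EMetric.diam_singleton]
      exact zero_le
    · intro y hy
      exact absurd ⟨y, hy⟩ hseq


end ConfDyn
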